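/- Fix N, S, d ≥ 1, β > 0, α ≥ 0, and a matrix Q ∈ ℝ^{S×d} with rows q_1, …, q_S. Define E : ℝ^{N×d} → ℝ on matrices K (with rows k_1, …, k_N) by E(K) = (α/2)·∑_{i=1}^N ⟨k_i, k_i⟩ − ∑_{i=1}^N β⁻¹·log(∑_{j=1}^S exp(β·⟨q_j, k_i⟩)) + log(∑_{i=1}^N exp(½·⟨k_i, k_i⟩)). Then E is differentiable, and for every K the negative gradient −∇_K E(K) is the matrix whose i-th row equals ∑_{j=1}^S softmax(β·Qk_i)_j · q_j − (α + p_i(K))·k_i, where p_i(K) = exp(½·⟨k_i, k_i⟩)/∑_{m=1}^N exp(½·⟨k_m, k_m⟩); equivalently, −∇_K E(K) = sm(β·K Qᵀ)·Q − (α·I + 𝒟(sm(½·diag(KKᵀ))))·K, where sm is applied row-wise in the first term. -/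

import Mathlib

noncomputable def eia (N d : ℕ) (i : Fin N) (a : Fin d) : (Fin N → Fin d → ℝ) →L[ℝ] ℝ :=
  (ContinuousLinearMap.proj (R := ℝ) (φ := fun _ : Fin d => ℝ) a).comp
    (ContinuousLinearMap.proj (R := ℝ) (φ := fun _ : Fin N => Fin d → ℝ) i)

/-- Gradient identity underlying the MAP teacher-attention update. For
`E(K) = (α/2)·∑ᵢ⟨kᵢ,kᵢ⟩ − ∑ᵢ β⁻¹·log(∑ⱼ exp(β·⟨qⱼ,kᵢ⟩)) + log(∑ᵢ exp(½·⟨kᵢ,kᵢ⟩))`,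
`E` is differentiable and the `(i,a)` entry of `−∇_K E(K)` equals
`∑ⱼ softmax(β·Qkᵢ)ⱼ · Q j a − (α + pᵢ(K))·K i a`, where
`pᵢ(K) = exp(½·⟨kᵢ,kᵢ⟩)/∑ₘ exp(½·⟨kₘ,kₘ⟩)`. -/
theorem energy_neg_grad_teacher_update
    (N S d : ℕ) (hN : 1 ≤ N) (hS : 1 ≤ S) (hd : 1 ≤ d)
    (β : ℝ) (hβ : 0 < β) (α : ℝ) (hα : 0 ≤ α)
    (Q : Fin S → Fin d → ℝ)
    (E : (Fin N → Fin d → ℝ) → ℝ)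
    (hE : E = fun K =>
      (α / 2) * ∑ i, (∑ a, K i a * K i a)
        - ∑ i, β⁻¹ * Real.log (∑ j, Real.exp (β * ∑ a, Q j a * K i a))
        + Real.log (∑ i, Real.exp ((1 / 2) * ∑ a, K i a * K i a))) :
    Differentiable ℝ E ∧
      ∀ (K : Fin N → Fin d → ℝ) (i : Fin N) (a : Fin d),
        -(fderiv ℝ E K (Pi.single i (Pi.single a 1))) =
          (∑ j, (Real.exp (β * ∑ b, Q j b * K i b) /
              ∑ j', Real.exp (β * ∑ b, Q j' b * K i b)) * Q j a)
          - (α + Real.exp ((1 / 2) * ∑ b, K i b * K i b) /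
              ∑ m, Real.exp ((1 / 2) * ∑ b, K m b * K m b)) * K i a := by
  have he : ∀ (K : Fin N → Fin d → ℝ) (i : Fin N) (a : Fin d),
      HasFDerivAt (fun K : Fin N → Fin d → ℝ => K i a) (eia N d i a) K :=
    fun K i a => (eia N d i a).hasFDerivAt
  -- derivative pieces
  have h1 : ∀ (K : Fin N → Fin d → ℝ), HasFDerivAt
      (fun K : Fin N → Fin d → ℝ => (α / 2) * ∑ i, (∑ a, K i a * K i a))
      ((α / 2) • ∑ i, ∑ a, (K i a • eia N d i a + K i a • eia N d i a)) K :=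
    fun K => (HasFDerivAt.fun_sum fun i _ => HasFDerivAt.fun_sum fun a _ =>
      (he K i a).mul (he K i a)).const_mul (α / 2)
  have hip : ∀ (K : Fin N → Fin d → ℝ) (j : Fin S) (i : Fin N), HasFDerivAt
      (fun K : Fin N → Fin d → ℝ => ∑ b, Q j b * K i b)
      (∑ b, Q j b • eia N d i b) K :=
    fun K j i => HasFDerivAt.fun_sum fun b _ => (he K i b).const_mul (Q j b)
  have hposJ : ∀ (K : Fin N → Fin d → ℝ) (i : Fin N), (0:ℝ) < ∑ j, Real.exp (β * ∑ b, Q j b * K i b) :=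
    fun K i => Finset.sum_pos (fun j _ => Real.exp_pos _)
      (Finset.univ_nonempty_iff.2 ⟨⟨0, hS⟩⟩)
  have h2 : ∀ (K : Fin N → Fin d → ℝ), HasFDerivAt
      (fun K : Fin N → Fin d → ℝ =>
        ∑ i, β⁻¹ * Real.log (∑ j, Real.exp (β * ∑ a, Q j a * K i a)))
      (∑ i, β⁻¹ • ((∑ j, Real.exp (β * ∑ b, Q j b * K i b))⁻¹ •
        ∑ j, Real.exp (β * ∑ b, Q j b * K i b) • (β • ∑ b, Q j b • eia N d i b))) K :=
    fun K => HasFDerivAt.fun_sum fun i _ =>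
      ((HasFDerivAt.fun_sum fun j _ => ((hip K j i).const_mul β).exp).log
        (ne_of_gt (hposJ K i))).const_mul β⁻¹
  have hsq : ∀ (K : Fin N → Fin d → ℝ) (i : Fin N), HasFDerivAt
      (fun K : Fin N → Fin d → ℝ => (1/2 : ℝ) * ∑ b, K i b * K i b)
      ((1/2 : ℝ) • ∑ b, (K i b • eia N d i b + K i b • eia N d i b)) K :=
    fun K i => (HasFDerivAt.fun_sum fun b _ => (he K i b).mul (he K i b)).const_mul (1/2)
  have hposM : ∀ (K : Fin N → Fin d → ℝ), (0:ℝ) < ∑ m, Real.exp ((1/2 : ℝ) * ∑ b, K m b * K m b) :=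
    fun K => Finset.sum_pos (fun m _ => Real.exp_pos _)
      (Finset.univ_nonempty_iff.2 ⟨⟨0, hN⟩⟩)
  have h3 : ∀ (K : Fin N → Fin d → ℝ), HasFDerivAt
      (fun K : Fin N → Fin d → ℝ =>
        Real.log (∑ i, Real.exp ((1/2 : ℝ) * ∑ a, K i a * K i a)))
      ((∑ m, Real.exp ((1/2 : ℝ) * ∑ b, K m b * K m b))⁻¹ •
        ∑ i, Real.exp ((1/2 : ℝ) * ∑ b, K i b * K i b) •
          ((1/2 : ℝ) • ∑ b, (K i b • eia N d i b + K i b • eia N d i b))) K :=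
    fun K => (HasFDerivAt.fun_sum fun i _ => (hsq K i).exp).log (ne_of_gt (hposM K))
  have htot : ∀ (K : Fin N → Fin d → ℝ), HasFDerivAt E
      (((α / 2) • ∑ i, ∑ a, (K i a • eia N d i a + K i a • eia N d i a)
        - ∑ i, β⁻¹ • ((∑ j, Real.exp (β * ∑ b, Q j b * K i b))⁻¹ •
            ∑ j, Real.exp (β * ∑ b, Q j b * K i b) • (β • ∑ b, Q j b • eia N d i b)))
        + (∑ m, Real.exp ((1/2 : ℝ) * ∑ b, K m b * K m b))⁻¹ •
            ∑ i, Real.exp ((1/2 : ℝ) * ∑ b, K i b * K i b) •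
              ((1/2 : ℝ) • ∑ b, (K i b • eia N d i b + K i b • eia N d i b))) K := by
    intro K
    rw [hE]
    exact ((h1 K).sub (h2 K)).add (h3 K)
  refine ⟨fun K => (htot K).differentiableAt, ?_⟩
  intro K i a
  rw [(htot K).fderiv]
  have hsing : ∀ (i' : Fin N) (a' : Fin d),
      (eia N d i' a') (Pi.single i (Pi.single a 1)) =
        if i' = i ∧ a' = a then 1 else 0 := by
    intro i' a'
    simp only [eia, ContinuousLinearMap.comp_apply, ContinuousLinearMap.proj_apply,
      Pi.single_apply]
    by_cases h : i' = i
    · subst h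
      by_cases h' : a' = a
      · subst h'; simp
      · simp [h']
    · simp [h]
  simp only [ContinuousLinearMap.add_apply, ContinuousLinearMap.sub_apply,
    ContinuousLinearMap.smul_apply, ContinuousLinearMap.coe_smul', Pi.smul_apply,
    ContinuousLinearMap.sum_apply, hsing, smul_eq_mul]
  have hco : ∀ (P Q' : Prop) [Decidable P] [Decidable Q'] (v : ℝ),
      (if P ∧ Q' then v else 0) = if Q' then (if P then v else 0) else 0 := by
    intro P Q' _ _ v
    by_cases h : P <;> by_cases h' : Q' <;> simp [h, h']
  simp only [mul_ite, mul_one, mul_zero, hco, mul_add, mul_ite,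
    Finset.sum_add_distrib, Finset.sum_ite_eq', Finset.mem_univ, if_true]
  simp only [Finset.sum_ite_irrel, Finset.sum_const_zero, mul_ite, mul_zero,
    Finset.sum_ite_eq', Finset.mem_univ, if_true]
  have hA : (∑ x : Fin S, Real.exp (β * ∑ b, Q x b * K i b) * (β * Q x a))
      = β * ∑ j : Fin S, Real.exp (β * ∑ b, Q j b * K i b) * Q j a := by
    rw [Finset.mul_sum]; exact Finset.sum_congr rfl fun j _ => by ring
  have hR : (∑ j : Fin S, (Real.exp (β * ∑ b, Q j b * K i b) /
        ∑ j' : Fin S, Real.exp (β * ∑ b, Q j' b * K i b)) * Q j a)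
      = (∑ j' : Fin S, Real.exp (β * ∑ b, Q j' b * K i b))⁻¹ *
          ∑ j : Fin S, Real.exp (β * ∑ b, Q j b * K i b) * Q j a := by
    rw [Finset.mul_sum]; exact Finset.sum_congr rfl fun j _ => by ring
  have hcancel : β⁻¹ * ((∑ j' : Fin S, Real.exp (β * ∑ b, Q j' b * K i b))⁻¹ *
      (β * ∑ j : Fin S, Real.exp (β * ∑ b, Q j b * K i b) * Q j a))
      = (∑ j' : Fin S, Real.exp (β * ∑ b, Q j' b * K i b))⁻¹ *
          ∑ j : Fin S, Real.exp (β * ∑ b, Q j b * K i b) * Q j a := by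
    rw [mul_left_comm, inv_mul_cancel_left₀ (ne_of_gt hβ)]
  rw [hA, hR, hcancel]
  ring
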